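/- arXiv:1605.00437 — 3 statements merged into one kernel-verified Lean document; each statement's English description precedes it below -/
import Mathlib

section
/- Let J ∈ ℕ, let M and K be real symmetric J×J matrices with M invertible, let c₀ ∈ ℂ^J, and set c(t) = exp(−(i/2) t · M⁻¹K) · c₀ (the real matrices acting on ℂ^J via entrywise coercion). Then for every t ∈ ℝ, star(c(t)) ⬝ᵥ (M ⬝ᵥ c(t)) = star(c₀) ⬝ᵥ (M ⬝ᵥ c₀). -/
open Matrix

/-- L²-unitarity of the discrete free Schrödinger subflow in coefficient form:
for real symmetric `M`, `K` with `M` invertible and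
`c(t) = exp(−(i/2) t · M⁻¹K) c₀`, the quadratic form `star c ⬝ᵥ (M ⬝ᵥ c)` is conserved. -/
theorem discrete_L2_conservation_free_flow (J : ℕ) (M K : Matrix (Fin J) (Fin J) ℝ)
    (hMsymm : M.IsSymm) (hKsymm : K.IsSymm) (hM : IsUnit M) (c₀ : Fin J → ℂ) :
    ∀ t : ℝ,
      star ((NormedSpace.exp ((-(Complex.I / 2) * (t : ℂ)) •
          ((M⁻¹ * K).map Complex.ofReal))) *ᵥ c₀) ⬝ᵥ
        ((M.map Complex.ofReal) *ᵥ
          ((NormedSpace.exp ((-(Complex.I / 2) * (t : ℂ)) •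
            ((M⁻¹ * K).map Complex.ofReal))) *ᵥ c₀)) =
      star c₀ ⬝ᵥ ((M.map Complex.ofReal) *ᵥ c₀) := by
  intro t
  set w : ℂ := -(Complex.I / 2) * (t : ℂ) with hw
  set Mc : Matrix (Fin J) (Fin J) ℂ := M.map Complex.ofReal with hMc
  set A : Matrix (Fin J) (Fin J) ℂ := (M⁻¹ * K).map Complex.ofReal with hA
  set N : Matrix (Fin J) (Fin J) ℂ := NormedSpace.exp (w • A) with hN
  have hmap : ∀ (P Q : Matrix (Fin J) (Fin J) ℝ),
      (P * Q).map Complex.ofReal = P.map Complex.ofReal * Q.map Complex.ofReal := fun P Q =>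
    Matrix.map_mul (f := Complex.ofRealHom)
  -- Mc is a unit
  have hMcUnit : IsUnit Mc := by
    have := hM.map (RingHom.mapMatrix (m := Fin J) Complex.ofRealHom)
    exact this
  -- Mc * A = Kc
  have h1 : Mc * A = K.map Complex.ofReal := by
    rw [hMc, hA, ← hmap, ← Matrix.mul_assoc, Matrix.mul_nonsing_inv _
      ((Matrix.isUnit_iff_isUnit_det M).mp hM), Matrix.one_mul]
  -- Aᴴ * Mc = Kc
  have hAH : Aᴴ = (K * M⁻¹).map Complex.ofReal := by
    rw [hA]
    have : ((M⁻¹ * K).map Complex.ofReal)ᴴ = ((M⁻¹ * K)ᵀ).map Complex.ofReal := by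
      ext i j
      simp only [Matrix.conjTranspose_apply, Matrix.map_apply, Matrix.transpose_apply,
        Complex.star_def, Complex.conj_ofReal]
    rw [this, Matrix.transpose_mul, hKsymm.eq, Matrix.transpose_nonsing_inv, hMsymm.eq]
  have h2 : Aᴴ * Mc = K.map Complex.ofReal := by
    rw [hAH, hMc, ← hmap, Matrix.mul_assoc, Matrix.nonsing_inv_mul _
      ((Matrix.isUnit_iff_isUnit_det M).mp hM), Matrix.mul_one]
  have hcomm : Aᴴ * Mc = Mc * A := by rw [h1, h2]
  have hMcdet : IsUnit Mc.det := (Matrix.isUnit_iff_isUnit_det Mc).mp hMcUnit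
  -- Aᴴ = Mc * A * Mc⁻¹
  have hconj : Aᴴ = Mc * A * Mc⁻¹ := by
    calc Aᴴ = Aᴴ * Mc * Mc⁻¹ := by
          rw [Matrix.mul_assoc, Matrix.mul_nonsing_inv _ hMcdet, Matrix.mul_one]
      _ = Mc * A * Mc⁻¹ := by rw [hcomm]
  -- star w = -w
  have hstarw : starRingEnd ℂ w = -w := by
    rw [hw]
    rw [_root_.map_mul, _root_.map_neg, map_div₀, Complex.conj_I, Complex.conj_ofReal,
      map_ofNat]
    ring
  -- Nᴴ * Mc = Mc * N⁻¹
  have hNH : Nᴴ = NormedSpace.exp ((starRingEnd ℂ w) • Aᴴ) := by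
    rw [← Matrix.exp_conjTranspose, Matrix.conjTranspose_smul]
    rfl
  have hkey : Nᴴ * Mc * N = Mc := by
    have h3 : (starRingEnd ℂ w) • Aᴴ = Mc * ((starRingEnd ℂ w) • A) * Mc⁻¹ := by
      rw [hconj, Matrix.mul_smul, Matrix.smul_mul]
    have h4 : Nᴴ = Mc * NormedSpace.exp ((starRingEnd ℂ w) • A) * Mc⁻¹ := by
      rw [hNH, h3, Matrix.exp_conj Mc _ hMcUnit]
    have h5 : NormedSpace.exp ((starRingEnd ℂ w) • A) = N⁻¹ := by
      rw [hstarw, neg_smul, Matrix.exp_neg, hN]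
    have hNdet : IsUnit N.det :=
      (Matrix.isUnit_iff_isUnit_det N).mp (Matrix.isUnit_exp _)
    rw [h4, h5, Matrix.mul_assoc (Mc * N⁻¹), Matrix.nonsing_inv_mul _ hMcdet,
      Matrix.mul_one, Matrix.mul_assoc, Matrix.nonsing_inv_mul _ hNdet, Matrix.mul_one]
  -- finish via dot product algebra
  calc star (N *ᵥ c₀) ⬝ᵥ (Mc *ᵥ (N *ᵥ c₀))
      = (star c₀ ᵥ* Nᴴ) ⬝ᵥ ((Mc * N) *ᵥ c₀) := by
        rw [Matrix.star_mulVec, Matrix.mulVec_mulVec]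
    _ = ((star c₀ ᵥ* Nᴴ) ᵥ* (Mc * N)) ⬝ᵥ c₀ := by rw [Matrix.dotProduct_mulVec]
    _ = (star c₀ ᵥ* (Nᴴ * (Mc * N))) ⬝ᵥ c₀ := by rw [Matrix.vecMul_vecMul]
    _ = (star c₀ ᵥ* Mc) ⬝ᵥ c₀ := by rw [← Matrix.mul_assoc, hkey]
    _ = star c₀ ⬝ᵥ (Mc *ᵥ c₀) := by rw [Matrix.dotProduct_mulVec]
end

section
/- Let J ∈ ℕ, let M and K be real symmetric J×J matrices with M invertible, let c₀ ∈ ℂ^J, and set c(t) = exp(−(i/2) t · M⁻¹K) · c₀ (the real matrices acting on ℂ^J via entrywise coercion). Then for every t ∈ ℝ, star(c(t)) ⬝ᵥ (K ⬝ᵥ c(t)) = star(c₀) ⬝ᵥ (K ⬝ᵥ c₀). -/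
open Matrix

/-- H¹-unitarity of the discrete free Schrödinger subflow in coefficient form:
for real symmetric `M`, `K` with `M` invertible and
`c(t) = exp(−(i/2) t · M⁻¹K) c₀`, the quadratic form `star c ⬝ᵥ (K ⬝ᵥ c)` is conserved. -/
theorem discrete_H1_conservation_free_flow (J : ℕ) (M K : Matrix (Fin J) (Fin J) ℝ)
    (hMsymm : M.IsSymm) (hKsymm : K.IsSymm) (hM : IsUnit M) (c₀ : Fin J → ℂ) :
    ∀ t : ℝ,
      star ((NormedSpace.exp ((-(Complex.I / 2) * (t : ℂ)) •
          ((M⁻¹ * K).map Complex.ofReal))) *ᵥ c₀) ⬝ᵥ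
        ((K.map Complex.ofReal) *ᵥ
          ((NormedSpace.exp ((-(Complex.I / 2) * (t : ℂ)) •
            ((M⁻¹ * K).map Complex.ofReal))) *ᵥ c₀)) =
      star c₀ ⬝ᵥ ((K.map Complex.ofReal) *ᵥ c₀) := by
  intro t
  set z : ℂ := -(Complex.I / 2) * (t : ℂ) with hz
  set A : Matrix (Fin J) (Fin J) ℂ := (M⁻¹ * K).map Complex.ofReal with hA
  set Mc : Matrix (Fin J) (Fin J) ℂ := M.map Complex.ofReal with hMc
  set Kc : Matrix (Fin J) (Fin J) ℂ := K.map Complex.ofReal with hKc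
  set Nc : Matrix (Fin J) (Fin J) ℂ := (M⁻¹).map Complex.ofReal with hNc
  set E : Matrix (Fin J) (Fin J) ℂ := NormedSpace.exp (z • A) with hE
  have hdet : IsUnit M.det := (Matrix.isUnit_iff_isUnit_det M).mp hM
  -- map facts
  have hmapmul : ∀ (P Q : Matrix (Fin J) (Fin J) ℝ),
      (P * Q).map Complex.ofReal = P.map Complex.ofReal * Q.map Complex.ofReal := by
    intro P Q
    exact Matrix.map_mul (f := Complex.ofRealHom)
  have hMN : Mc * Nc = 1 := by
    rw [hMc, hNc, ← hmapmul, Matrix.mul_nonsing_inv M hdet]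
    ext i j
    simp only [Matrix.map_apply, Matrix.one_apply]
    split <;> simp
  have hNM : Nc * Mc = 1 := by
    rw [hMc, hNc, ← hmapmul, Matrix.nonsing_inv_mul M hdet]
    ext i j
    simp only [Matrix.map_apply, Matrix.one_apply]
    split <;> simp
  have hdetc : Mc.det * Nc.det = 1 := by rw [← Matrix.det_mul, hMN, Matrix.det_one]
  have hMcUnit : IsUnit Mc :=
    (Matrix.isUnit_iff_isUnit_det Mc).mpr (IsUnit.of_mul_eq_one _ hdetc)
  have hNcInv : Mc⁻¹ = Nc := Matrix.inv_eq_right_inv hMN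
  have hANK : A = Nc * Kc := by rw [hA, hNc, hKc, hmapmul]
  -- transpose relation over ℝ: M * (M⁻¹K) * M⁻¹ = (M⁻¹K)ᵀ
  have hrelℝ : M * (M⁻¹ * K) * M⁻¹ = (M⁻¹ * K)ᵀ := by
    rw [Matrix.transpose_mul, Matrix.transpose_nonsing_inv, hMsymm.eq, hKsymm.eq,
      Matrix.mul_nonsing_inv_cancel_left M K hdet]
  have hmapT : ((M⁻¹ * K)ᵀ).map Complex.ofReal = Aᵀ := by
    rw [hA]; exact Matrix.transpose_map.symm ▸ rfl
  have hrel : Mc * A * Nc = Aᵀ := by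
    rw [hA, hMc, hNc, ← hmapmul, ← hmapmul, hrelℝ, Matrix.transpose_map]
  -- conjugate transpose of A is its transpose (real entries)
  have hAH : Aᴴ = Aᵀ := by
    ext i j
    simp [Matrix.conjTranspose_apply, Matrix.transpose_apply, hA, Matrix.map_apply,
      Complex.conj_ofReal]
  -- star z = -z
  have hzstar : star z = -z := by
    show starRingEnd ℂ z = -z
    rw [hz, _root_.map_mul, map_neg, map_div₀, Complex.conj_I, Complex.conj_ofReal, map_ofNat]
    ring
  -- Eᴴ = exp((-z) • Aᵀ)
  have hEH : Eᴴ = NormedSpace.exp ((-z) • Aᵀ) := by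
    rw [hE, ← Matrix.exp_conjTranspose]
    congr 1
    rw [Matrix.conjTranspose_smul, hAH, hzstar]
  -- exp((-z)•Aᵀ) = Mc * exp((-z)•A) * Mc⁻¹
  have hsmulconj : (-z) • Aᵀ = Mc * ((-z) • A) * Mc⁻¹ := by
    rw [hNcInv, Matrix.mul_smul, Matrix.smul_mul, hrel]
  have hEHconj : Eᴴ = Mc * NormedSpace.exp ((-z) • A) * Mc⁻¹ := by
    rw [hEH, hsmulconj, Matrix.exp_conj Mc ((-z) • A) hMcUnit]
  -- A commutes with E
  have hcommAE : A * E = E * A := by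
    have : Commute A (z • A) := (Commute.refl A).smul_right z
    exact (this.exp_right).eq
  -- exp(-z•A) * exp(z•A) = 1
  have hinv : NormedSpace.exp ((-z) • A) * E = 1 := by
    rw [hE, ← Matrix.exp_add_of_commute ((-z) • A) (z • A) (((Commute.refl A).smul_left (-z)).smul_right z)]
    rw [← add_smul, neg_add_cancel, zero_smul, NormedSpace.exp_zero]
  -- main matrix identity
  have hkey : Eᴴ * Kc * E = Kc := by
    rw [hEHconj, hNcInv]
    have h1 : Mc * NormedSpace.exp ((-z) • A) * Nc * Kc * E
        = Mc * (NormedSpace.exp ((-z) • A) * (Nc * Kc * E)) := by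
      simp only [Matrix.mul_assoc]
    rw [h1, ← hANK, hcommAE,
      ← Matrix.mul_assoc (NormedSpace.exp ((-z) • A)) E A, hinv, Matrix.one_mul,
      hANK, ← Matrix.mul_assoc Mc Nc Kc, hMN, Matrix.one_mul]
  -- conclude via quadratic form manipulation
  calc star (E *ᵥ c₀) ⬝ᵥ (Kc *ᵥ (E *ᵥ c₀))
      = (star c₀ ᵥ* Eᴴ) ⬝ᵥ ((Kc * E) *ᵥ c₀) := by rw [Matrix.star_mulVec, Matrix.mulVec_mulVec]
    _ = (star c₀ ᵥ* (Eᴴ * (Kc * E))) ⬝ᵥ c₀ := by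
        rw [Matrix.dotProduct_mulVec, Matrix.vecMul_vecMul]
    _ = (star c₀ ᵥ* (Eᴴ * Kc * E)) ⬝ᵥ c₀ := by rw [Matrix.mul_assoc]
    _ = star c₀ ⬝ᵥ (Kc *ᵥ c₀) := by rw [hkey, ← Matrix.dotProduct_mulVec]
end

section
/- Let J ∈ ℕ, let M and Φ be real symmetric J×J matrices with M invertible, let c₀ ∈ ℂ^J, and set c(t) = exp(−i t · M⁻¹Φ) · c₀ (the real matrices acting on ℂ^J via entrywise coercion). Then for every t ∈ ℝ, star(c(t)) ⬝ᵥ (M ⬝ᵥ c(t)) = star(c₀) ⬝ᵥ (M ⬝ᵥ c₀). -/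
open Matrix

/-- L²-unitarity of the discrete potential subflow in coefficient form:
for real symmetric `M`, `Φ` with `M` invertible and
`c(t) = exp(−i t · M⁻¹Φ) c₀`, the quadratic form `star c ⬝ᵥ (M ⬝ᵥ c)` is conserved. -/
theorem discrete_L2_conservation_potential_flow (J : ℕ) (M Φ : Matrix (Fin J) (Fin J) ℝ)
    (hMsymm : M.IsSymm) (hΦsymm : Φ.IsSymm) (hM : IsUnit M) (c₀ : Fin J → ℂ) :
    ∀ t : ℝ,
      star ((NormedSpace.exp ((-Complex.I * (t : ℂ)) •
          ((M⁻¹ * Φ).map Complex.ofReal))) *ᵥ c₀) ⬝ᵥ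
        ((M.map Complex.ofReal) *ᵥ
          ((NormedSpace.exp ((-Complex.I * (t : ℂ)) •
            ((M⁻¹ * Φ).map Complex.ofReal))) *ᵥ c₀)) =
      star c₀ ⬝ᵥ ((M.map Complex.ofReal) *ᵥ c₀) := by
  intro t
  set A : Matrix (Fin J) (Fin J) ℂ := (M⁻¹ * Φ).map Complex.ofReal with hA
  set Mc : Matrix (Fin J) (Fin J) ℂ := M.map Complex.ofReal with hMc
  set B : Matrix (Fin J) (Fin J) ℂ := (-Complex.I * (t : ℂ)) • A with hB
  set N : Matrix (Fin J) (Fin J) ℂ := NormedSpace.exp B with hN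
  have mapmul : ∀ X Y : Matrix (Fin J) (Fin J) ℝ,
      (X * Y).map Complex.ofReal = X.map Complex.ofReal * Y.map Complex.ofReal := by
    intro X Y
    ext i j
    simp [Matrix.mul_apply, Matrix.map_apply]
  have hMcU : IsUnit Mc := by
    rcases hM with ⟨u, hu⟩
    exact ⟨⟨Mc, (↑u⁻¹ : Matrix (Fin J) (Fin J) ℝ).map Complex.ofReal,
      by rw [hMc, ← hu, ← mapmul, u.mul_inv]; ext i j; simp [Matrix.map_apply,
        Matrix.one_apply]; split <;> simp,
      by rw [hMc, ← hu, ← mapmul, u.inv_mul]; ext i j; simp [Matrix.map_apply,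
        Matrix.one_apply]; split <;> simp⟩, rfl⟩
  have hMdet : IsUnit M.det := isUnit_iff_isUnit_det M |>.mp hM
  have hMinv : M * M⁻¹ = 1 := Matrix.mul_nonsing_inv M hMdet
  have hinvM : M⁻¹ * M = 1 := Matrix.nonsing_inv_mul M hMdet
  have hMA : Mc * A = Φ.map Complex.ofReal := by
    rw [hMc, hA, ← mapmul, ← mul_assoc, hMinv, one_mul]
  have hAT : Aᵀ * Mc = Φ.map Complex.ofReal := by
    have h1 : (M⁻¹)ᵀ = M⁻¹ := by
      rw [Matrix.transpose_nonsing_inv, hMsymm.eq]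
    have h2 : (M⁻¹ * Φ)ᵀ * M = Φ := by
      rw [Matrix.transpose_mul, hΦsymm.eq, h1, mul_assoc, hinvM, mul_one]
    have h3 : Aᵀ = ((M⁻¹ * Φ)ᵀ).map Complex.ofReal := Matrix.transpose_map.symm
    rw [h3, hMc, ← mapmul, h2]
  -- star B = Mc * (-B) * Mc⁻¹
  have hstarA : Aᴴ = Aᵀ := by
    ext i j
    simp [hA, Matrix.conjTranspose_apply, Matrix.map_apply, Matrix.transpose_apply]
  have hstarB : Bᴴ = (Complex.I * (t : ℂ)) • Aᵀ := by
    rw [hB, Matrix.conjTranspose_smul, hstarA]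
    congr 1
    simp [Complex.ext_iff]
  have hkey : Bᴴ * Mc = Mc * (-B) := by
    rw [hstarB, hB, Matrix.smul_mul, hAT, mul_neg, Matrix.mul_smul, hMA,
      ← neg_smul, neg_mul, neg_neg]
  have hMcMcinv : Mc * Mc⁻¹ = 1 :=
    Matrix.mul_nonsing_inv Mc (isUnit_iff_isUnit_det Mc |>.mp hMcU)
  have hMcinvMc : Mc⁻¹ * Mc = 1 :=
    Matrix.nonsing_inv_mul Mc (isUnit_iff_isUnit_det Mc |>.mp hMcU)
  have hconj : Bᴴ = Mc * (-B) * Mc⁻¹ := by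
    rw [← hkey, mul_assoc, hMcMcinv, mul_one]
  have hstarN : Nᴴ = Mc * NormedSpace.exp (-B) * Mc⁻¹ := by
    rw [hN, ← Matrix.exp_conjTranspose, hconj, Matrix.exp_conj Mc (-B) hMcU]
  have hexpinv : NormedSpace.exp (-B) * NormedSpace.exp B = 1 := by
    rw [← Matrix.exp_add_of_commute (-B) B (Commute.refl B).neg_left, neg_add_cancel,
      NormedSpace.exp_zero]
  have hmain : Nᴴ * (Mc * N) = Mc := by
    rw [hstarN, hN, mul_assoc, ← mul_assoc Mc⁻¹, hMcinvMc, one_mul, mul_assoc, hexpinv,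
      mul_one]
  calc star (N *ᵥ c₀) ⬝ᵥ (Mc *ᵥ (N *ᵥ c₀))
      = star (N *ᵥ c₀) ⬝ᵥ ((Mc * N) *ᵥ c₀) := by rw [Matrix.mulVec_mulVec]
    _ = (star c₀ ᵥ* Nᴴ) ⬝ᵥ ((Mc * N) *ᵥ c₀) := by rw [Matrix.star_mulVec]
    _ = star c₀ ⬝ᵥ ((Nᴴ * (Mc * N)) *ᵥ c₀) := by
        rw [Matrix.dotProduct_mulVec, Matrix.vecMul_vecMul, Matrix.dotProduct_mulVec]
    _ = star c₀ ⬝ᵥ (Mc *ᵥ c₀) := by rw [hmain]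
end
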